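/- Let (i_1,…,i_M) ∈ L, let S ∈ 𝒮, and let i ∈ S. Then there exists a permutation σ of N₀ such that i_m is the σ-top of S_m for every m ∈ {1,…,M} and i is the σ-top of S, if and only if no vertex j ∈ S is reachable from i in the directed graph G_{i_1⋯i_M}. -/
import Mathlib


namespace RobustAssortment

/-- `i` is the most preferred product of the assortment `S` under the ranking `σ`. -/
def isTop {n : ℕ} (σ : Equiv.Perm (Fin (n + 1))) (S : Finset (Fin (n + 1)))
    (i : Fin (n + 1)) : Prop :=
  i ∈ S ∧ ∀ j ∈ S, σ i ≤ σ j

instance {n : ℕ} (σ : Equiv.Perm (Fin (n + 1))) (S : Finset (Fin (n + 1)))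
    (i : Fin (n + 1)) : Decidable (isTop σ S i) := by
  unfold isTop; infer_instance
/-- Membership in the set `L` of tuples of products compatible with a common ranking. -/
def memL {n M : ℕ} (Sm : Fin M → Finset (Fin (n + 1)))
    (t : Fin M → Fin (n + 1)) : Prop :=
  ∃ σ : Equiv.Perm (Fin (n + 1)), ∀ m : Fin M, isTop σ (Sm m) (t m)

instance {n M : ℕ} (Sm : Fin M → Finset (Fin (n + 1))) (t : Fin M → Fin (n + 1)) :
    Decidable (memL Sm t) := by
  unfold memL; infer_instance
/-- Directed edge relation of the graph `G_{i_1⋯i_M}`: an edge from `x` to `t m` for every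
`m` and every `x ∈ S_m` with `x ≠ t m`. -/
def Gedge {n M : ℕ} (Sm : Fin M → Finset (Fin (n + 1)))
    (t : Fin M → Fin (n + 1)) (x y : Fin (n + 1)) : Prop :=
  ∃ m : Fin M, y = t m ∧ x ∈ Sm m ∧ x ≠ t m

/-- Lemma of Appendix A of the paper: for `t ∈ L`, `S ∈ 𝒮` and `i ∈ S`, some ranking
compatible with `t` has `i` as the top of `S` iff no vertex of `S` is reachable from `i`
in `G_t`. -/
theorem statement16 (n M : ℕ) (hn : 1 ≤ n) (hM : 1 ≤ M)
    (Sm : Fin M → Finset (Fin (n + 1))) (hSm0 : ∀ m, (0 : Fin (n + 1)) ∈ Sm m)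
    (t : Fin M → Fin (n + 1)) (ht : memL Sm t)
    (S : Finset (Fin (n + 1))) (hS : 0 ∈ S) (i : Fin (n + 1)) (hi : i ∈ S) :
    (∃ σ : Equiv.Perm (Fin (n + 1)),
        (∀ m : Fin M, isTop σ (Sm m) (t m)) ∧ isTop σ S i) ↔
      ∀ j ∈ S, ¬ Relation.TransGen (Gedge Sm t) i j := by

  constructor
  · rintro ⟨σ, hσ, hiTop⟩ j hj htrans
    have step : ∀ x y, Gedge Sm t x y → σ y < σ x := by
      rintro x y ⟨m, rfl, hx, hne⟩
      exact lt_of_le_of_ne ((hσ m).2 x hx) (fun h => hne (σ.injective h.symm))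
    have gen : ∀ a b, Relation.TransGen (Gedge Sm t) a b → σ b < σ a := by
      intro a b h
      induction h with
      | single h => exact step _ _ h
      | tail _ h ih => exact lt_trans (step _ _ h) ih
    exact absurd (hiTop.2 j hj) (not_le.mpr (gen i j htrans))
  · intro hno
    obtain ⟨σ₀, hσ₀⟩ := ht
    classical
    set A : Fin (n + 1) → Prop := fun j => j = i ∨ Relation.TransGen (Gedge Sm t) i j with hA
    set key : Fin (n + 1) → Lex (Bool × Fin (n + 1)) :=
      fun j => toLex ((if A j then false else true), σ₀ j) with hkey
    have keyinj : Function.Injective key := by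
      intro x y h
      have h2 : ((if A x then false else true : Bool), σ₀ x)
          = ((if A y then false else true : Bool), σ₀ y) := by
        exact toLex.injective h
      exact σ₀.injective (congrArg Prod.snd h2)
    set K : Finset (Lex (Bool × Fin (n + 1))) := Finset.univ.image key with hK
    have hKcard : K.card = n + 1 := by
      rw [hK, Finset.card_image_of_injective _ keyinj, Finset.card_univ, Fintype.card_fin]
    set e : Fin (n + 1) ≃o K := K.orderIsoOfFin hKcard with he
    have hmem : ∀ x, key x ∈ K := fun x => Finset.mem_image_of_mem _ (Finset.mem_univ x)
    set f : Fin (n + 1) → Fin (n + 1) := fun x => e.symm ⟨key x, hmem x⟩ with hf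
    have finj : Function.Injective f := by
      intro x y h
      have := e.symm.injective h
      exact keyinj (congrArg Subtype.val this)
    set σ : Equiv.Perm (Fin (n + 1)) :=
      Equiv.ofBijective f (Finite.injective_iff_bijective.mp finj) with hσdef
    have hle : ∀ x y, σ x ≤ σ y ↔ key x ≤ key y := by
      intro x y
      show f x ≤ f y ↔ _
      rw [hf]
      rw [OrderIso.le_iff_le]
      exact Subtype.mk_le_mk
    have hAclosed : ∀ x y, Gedge Sm t x y → A x → A y := by
      rintro x y ⟨m, rfl, hx, hne⟩ hAx
      rcases hAx with rfl | htg
      · exact Or.inr (Relation.TransGen.single ⟨m, rfl, hx, hne⟩)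
      · exact Or.inr (htg.tail ⟨m, rfl, hx, hne⟩)
    refine ⟨σ, ?_, ?_⟩
    · intro m
      refine ⟨(hσ₀ m).1, fun x hx => ?_⟩
      by_cases hxt : x = t m
      · subst hxt; exact le_refl _
      rw [hle]
      have hedge : Gedge Sm t x (t m) := ⟨m, rfl, hx, hxt⟩
      have hb : (if A (t m) then false else true : Bool) ≤ (if A x then false else true) := by
        by_cases hAx : A x
        · simp [hAx, hAclosed x (t m) hedge hAx]
        · simp [hAx]
      have hs : σ₀ (t m) ≤ σ₀ x := (hσ₀ m).2 x hx
      rw [hkey, Prod.Lex.le_iff]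
      rcases lt_or_eq_of_le hb with h | h
      · exact Or.inl h
      · exact Or.inr ⟨h, hs⟩
    · refine ⟨hi, fun j hj => ?_⟩
      by_cases hji : j = i
      · subst hji; exact le_refl _
      rw [hle, hkey, Prod.Lex.le_iff]
      have hAi : A i := Or.inl rfl
      have hAj : ¬ A j := by
        rintro (rfl | htg)
        · exact hji rfl
        · exact hno j hj htg
      left
      simp [hAi, hAj]


end RobustAssortment
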